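/- Let a, b, ζ, α₀, β₀ ∈ ℝ with a ≠ 0, sin α₀ ≠ 0 and cos β₀ ≠ 0, and set c₁ = (ζ + b cos α₀)/(2a sin α₀ cos β₀). Let I ⊂ ℝ be an open interval and x : I → ℝ a differentiable function with x'(s) = (1 + a[x²(s) + (x(s)·tan β₀ + c₁)²])·sin α₀·cos β₀ for all s ∈ I; set y(s) = x(s)·tan β₀ + c₁ and let z : I → ℝ satisfy z'(s) = ((4a − b²)cos α₀ − bζ)/(4a). Then, writing λ(s) = 1 + a(x²(s) + y²(s)) and assuming λ(s) > 0 on I, for every s ∈ I: ((x'(s))² + (y'(s))²)/λ(s)² + (z'(s) + (b/2)·(y(s)·x'(s) − x(s)·y'(s))/λ(s))² = 1. -/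
import Mathlib


/-- The type (ii) curve `s ↦ (x(s), x(s)·tan β₀ + c₁, z(s))` in the BCV space `M(a,b)`
is parametrized by arc length with respect to the metric `g_{a,b}`. -/
theorem stmt_17 (a b ζ α₀ β₀ : ℝ) (ha : a ≠ 0) (hsin : Real.sin α₀ ≠ 0)
    (hcos : Real.cos β₀ ≠ 0)
    (c₁ : ℝ) (hc₁ : c₁ = (ζ + b * Real.cos α₀) / (2 * a * Real.sin α₀ * Real.cos β₀))
    (p q : ℝ) (x y z : ℝ → ℝ)
    (hyx : ∀ s, y s = x s * Real.tan β₀ + c₁)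
    (hx : ∀ s ∈ Set.Ioo p q,
      HasDerivAt x
        ((1 + a * ((x s) ^ 2 + (x s * Real.tan β₀ + c₁) ^ 2))
          * Real.sin α₀ * Real.cos β₀) s)
    (hz : ∀ s ∈ Set.Ioo p q,
      HasDerivAt z (((4 * a - b ^ 2) * Real.cos α₀ - b * ζ) / (4 * a)) s)
    (hpos : ∀ s ∈ Set.Ioo p q, 0 < 1 + a * ((x s) ^ 2 + (y s) ^ 2)) :
    ∀ s ∈ Set.Ioo p q,
      ((deriv x s) ^ 2 + (deriv y s) ^ 2) / (1 + a * ((x s) ^ 2 + (y s) ^ 2)) ^ 2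
        + (deriv z s
            + b / 2 * (y s * deriv x s - x s * deriv y s)
              / (1 + a * ((x s) ^ 2 + (y s) ^ 2))) ^ 2 = 1 := by
  intro s hs
  have hx' := hx s hs
  have hz' := hz s hs
  have hyfun : y = fun t => x t * Real.tan β₀ + c₁ := funext hyx
  have hy' : HasDerivAt y
      (((1 + a * ((x s) ^ 2 + (x s * Real.tan β₀ + c₁) ^ 2))
        * Real.sin α₀ * Real.cos β₀) * Real.tan β₀) s := by
    rw [hyfun]
    exact (hx'.mul_const _).add_const c₁
  have hLpos := hpos s hs
  rw [hyx s] at hLpos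
  rw [hx'.deriv, hy'.deriv, hz'.deriv, hyx s]
  set L := 1 + a * ((x s) ^ 2 + (x s * Real.tan β₀ + c₁) ^ 2) with hLdef
  have hLne : L ≠ 0 := ne_of_gt hLpos
  have htc : Real.tan β₀ * Real.cos β₀ = Real.sin β₀ := Real.tan_mul_cos hcos
  have hpb : Real.sin β₀ ^ 2 + Real.cos β₀ ^ 2 = 1 := Real.sin_sq_add_cos_sq β₀
  have h1 : ((L * Real.sin α₀ * Real.cos β₀) ^ 2
      + (L * Real.sin α₀ * Real.cos β₀ * Real.tan β₀) ^ 2) / L ^ 2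
      = Real.sin α₀ ^ 2 := by
    have hnum : (L * Real.sin α₀ * Real.cos β₀) ^ 2
        + (L * Real.sin α₀ * Real.cos β₀ * Real.tan β₀) ^ 2
        = Real.sin α₀ ^ 2 * L ^ 2 := by
      have h2 : L * Real.sin α₀ * Real.cos β₀ * Real.tan β₀
          = L * Real.sin α₀ * Real.sin β₀ := by
        linear_combination (L * Real.sin α₀) * htc
      rw [h2]
      linear_combination (L ^ 2 * Real.sin α₀ ^ 2) * hpb
    rw [hnum]
    field_simp
  have h2 : ((4 * a - b ^ 2) * Real.cos α₀ - b * ζ) / (4 * a)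
      + b / 2 * ((x s * Real.tan β₀ + c₁) * (L * Real.sin α₀ * Real.cos β₀)
          - x s * (L * Real.sin α₀ * Real.cos β₀ * Real.tan β₀)) / L
      = Real.cos α₀ := by
    have hinner : (x s * Real.tan β₀ + c₁) * (L * Real.sin α₀ * Real.cos β₀)
        - x s * (L * Real.sin α₀ * Real.cos β₀ * Real.tan β₀)
        = c₁ * Real.sin α₀ * Real.cos β₀ * L := by ring
    rw [hinner, hc₁]
    field_simp
    ring
  rw [h1, h2]
  exact Real.sin_sq_add_cos_sq α₀
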